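/- The boundary operator ∂_K on the oriented cellular chain complex of the associahedron, defined by ∂_K(T, e_1∧...∧e_m) = Σ_{T': T'/e' = T} (T', e'∧e_1∧...∧e_m) where the sum is over trees T' with an internal edge e' whose collapse yields T, satisfies ∂_K ∘ ∂_K = 0. -/

import Mathlib

/-- Planar rooted trees (children are ordered, so the trees are planar). -/
inductive PTree : Type
  | leaf : PTree
  | node : List PTree → PTree

namespace PTree

/- The number of leaves. -/
mutual
  def leaves : PTree → ℕ
    | .leaf => 1
    | .node cs => leavesList cs
  def leavesList : List PTree → ℕ
    | [] => 0
    | t :: ts => leaves t + leavesList ts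
end

/- The number of internal edges of a subtree, *including* its root edge
(which is internal once the subtree is hung below some vertex). -/
mutual
  def iesub : PTree → ℕ
    | .leaf => 0
    | .node cs => 1 + iesubList cs
  def iesubList : List PTree → ℕ
    | [] => 0
    | t :: ts => iesub t + iesubList ts
end

/-- The number of internal edges of a planar rooted tree: edges not adjacent
to a leaf and different from the root edge. -/
def iEdges : PTree → ℕ
  | .leaf => 0
  | .node cs => iesubList cs

/- The list of arities (numbers of children) of the internal vertices,
in preorder. -/
mutual
  def arities : PTree → List ℕ
    | .leaf => []
    | .node cs => cs.length :: aritiesList cs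
  def aritiesList : List PTree → List ℕ
    | [] => []
    | t :: ts => arities t ++ aritiesList ts
end

/-- Every internal vertex has at least `2` children. -/
def reduced (T : PTree) : Prop := ∀ r ∈ arities T, 2 ≤ r

/-- Every internal vertex has exactly `2` children, i.e. the tree is binary. -/
def isBin (T : PTree) : Prop := ∀ r ∈ arities T, r = 2

end PTree

namespace PTree

/- `contract T i` collapses the `i`-th internal edge of `T` (0-indexed in
the canonical preorder, i.e. depth-first left-to-right, ordering of the
internal edges): the vertex below the collapsed edge is merged into the
vertex above it. -/
mutual
  def csub : ℕ → PTree → List PTree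
    | _, .leaf => [.leaf]
    | i, .node cs => if i = 0 then cs else [.node (clist (i - 1) cs)]
  def clist : ℕ → List PTree → List PTree
    | _, [] => []
    | i, t :: ts =>
        if i < iesub t then csub i t ++ ts else t :: clist (i - iesub t) ts
end

def contract : PTree → ℕ → PTree
  | .leaf, _ => .leaf
  | .node cs, i => .node (clist i cs)

end PTree

/-- Cellular chains of the associahedra: since for every `n` there are only
finitely many planar rooted trees with `n` leaves, the chain module is the
module of integer-valued functions on the set of trees, each tree being
taken with its canonical orientation (the preorder ordering of its internal
edges).  An oriented cell `(T, ω)` is identified with `±1` times the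
corresponding basis (delta) function, the sign being the parity of `ω`
relative to the canonical ordering; this realizes the relation
`(T, ω) = -(T, ω')` for opposite orientations. -/
abbrev KChains : Type := PTree → ℤ

open PTree in
/-- The boundary operator `∂_K(T, e_1 ∧ ... ∧ e_m) = ∑_{T' : T'/e' = T}
(T', e' ∧ e_1 ∧ ... ∧ e_m)`, summing over all one-edge expansions `(T', e')`
of `T`, expressed in the canonical basis by its matrix coefficients: the
coefficient of `∂_K f` at a tree `T'` picks up, for every internal edge `e'`
of `T'`, the coefficient of `f` at `T'/e'`, with the sign `(-1)^{pos(e')}`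
converting the orientation `e' ∧ (canonical ordering of T'/e')` to the
canonical ordering of `T'`. -/
noncomputable def bndK (f : KChains) : KChains := fun T' =>
  ∑ i ∈ Finset.range (iEdges T'), ((-1 : ℤ)) ^ i * f (contract T' i)


namespace PTree

theorem iesubList_append (xs ys : List PTree) :
    iesubList (xs ++ ys) = iesubList xs + iesubList ys := by
  induction xs with
  | nil => simp [iesubList]
  | cons t ts ih => simp [iesubList, ih]; omega

mutual
theorem iesubList_csub (i : ℕ) (t : PTree) (h : i < iesub t) :
    iesubList (csub i t) = iesub t - 1 := by
  match t with
  | .leaf => simp [iesub] at h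
  | .node cs =>
    simp only [iesub] at h ⊢
    by_cases hi : i = 0
    · simp [csub, hi]
    · have h' : i - 1 < iesubList cs := by omega
      simp only [csub, hi, if_neg hi, ↓reduceIte, iesubList, iesub]
      rw [iesubList_clist (i-1) cs h']
      omega
  termination_by sizeOf t
theorem iesubList_clist (i : ℕ) (cs : List PTree) (h : i < iesubList cs) :
    iesubList (clist i cs) = iesubList cs - 1 := by
  match cs with
  | [] => simp [iesubList] at h
  | t :: ts =>
    simp only [iesubList] at h ⊢
    by_cases hi : i < iesub t
    · simp only [clist, if_pos hi, iesubList_append]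
      rw [iesubList_csub i t hi]
      omega
    · have h' : i - iesub t < iesubList ts := by omega
      simp only [clist, if_neg hi, iesubList]
      rw [iesubList_clist _ ts h']
      omega
  termination_by sizeOf cs
end

theorem clist_append_left (i : ℕ) (xs ys : List PTree) (h : i < iesubList xs) :
    clist i (xs ++ ys) = clist i xs ++ ys := by
  induction xs generalizing i with
  | nil => simp [iesubList] at h
  | cons t ts ih =>
    simp only [iesubList] at h
    by_cases hi : i < iesub t
    · simp [clist, if_pos hi, List.append_assoc]
    · have h' : i - iesub t < iesubList ts := by omega
      simp [clist, if_neg hi, ih _ h']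

theorem clist_append_right (i : ℕ) (xs ys : List PTree) (h : iesubList xs ≤ i) :
    clist i (xs ++ ys) = xs ++ clist (i - iesubList xs) ys := by
  induction xs generalizing i with
  | nil => simp [iesubList]
  | cons t ts ih =>
    simp only [iesubList] at h
    have hi : ¬ i < iesub t := by omega
    have h' : iesubList ts ≤ i - iesub t := by omega
    simp only [List.cons_append, clist, if_neg hi, iesubList, List.append_eq]
    rw [ih _ h', Nat.sub_sub]

mutual
theorem csub_comm (i j : ℕ) (t : PTree) (hij : i < j) (hj : j < iesub t) :
    clist i (csub j t) = clist (j - 1) (csub i t) := by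
  match t with
  | .leaf => simp [iesub] at hj
  | .node cs =>
    simp only [iesub] at hj
    have hj0 : j ≠ 0 := by omega
    by_cases hi : i = 0
    · subst hi
      have h1 : iesub (PTree.node (clist (j-1) cs)) = iesubList cs := by
        simp only [iesub]
        rw [iesubList_clist (j-1) cs (by omega)]
        omega
      simp only [csub, if_neg hj0, if_pos rfl, clist]
      rw [if_pos (by rw [h1]; omega)]
      simp [csub]
    · have h1 : iesub (PTree.node (clist (j-1) cs)) = iesubList cs := by
        simp only [iesub]
        rw [iesubList_clist (j-1) cs (by omega)]
        omega
      have h2 : iesub (PTree.node (clist (i-1) cs)) = iesubList cs := by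
        simp only [iesub]
        rw [iesubList_clist (i-1) cs (by omega)]
        omega
      simp only [csub, if_neg hj0, if_neg hi, clist]
      rw [if_pos (by rw [h1]; omega), if_pos (by rw [h2]; omega)]
      simp only [csub, if_neg hi, if_neg (show j - 1 ≠ 0 by omega)]
      rw [clist_comm (i-1) (j-1) cs (by omega)]
  termination_by sizeOf t
theorem clist_comm (i j : ℕ) (cs : List PTree) (hij : i < j) :
    clist i (clist j cs) = clist (j - 1) (clist i cs) := by
  match cs with
  | [] => simp [clist]
  | t :: ts =>
    by_cases hj : j < iesub t
    · -- then i < j < iesub t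
      have hi : i < iesub t := by omega
      have ha : iesubList (csub j t) = iesub t - 1 := iesubList_csub j t hj
      have hb : iesubList (csub i t) = iesub t - 1 := iesubList_csub i t hi
      simp only [clist, if_pos hj, if_pos hi]
      rw [clist_append_left i _ ts (by omega), clist_append_left (j-1) _ ts (by omega)]
      rw [csub_comm i j t hij hj]
    · by_cases hi : i < iesub t
      · -- i < iesub t ≤ j
        have ha : iesubList (csub i t) = iesub t - 1 := iesubList_csub i t hi
        simp only [clist, if_neg hj, if_pos hi]
        rw [clist_append_right (j-1) _ ts (by omega)]
        rw [ha]
        congr 2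
        omega
      · -- iesub t ≤ i < j
        have hj1 : ¬ j - 1 < iesub t := by omega
        simp only [clist, if_neg hj, if_neg hi, if_neg hj1]
        rw [clist_comm (i - iesub t) (j - iesub t) ts (by omega)]
        congr 2
        omega
  termination_by sizeOf cs
end

theorem iEdges_contract (T : PTree) (i : ℕ) (h : i < iEdges T) :
    iEdges (contract T i) = iEdges T - 1 := by
  match T with
  | .leaf => simp [iEdges] at h
  | .node cs => exact iesubList_clist i cs h

theorem contract_comm (T : PTree) (i j : ℕ) (hij : i < j) :
    contract (contract T j) i = contract (contract T i) (j - 1) := by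
  match T with
  | .leaf => simp [contract]
  | .node cs => simp only [contract, PTree.node.injEq]; exact clist_comm i j cs hij

end PTree

/-- `∂_K ∘ ∂_K = 0` on the oriented cellular chains of the associahedra. -/
theorem bndK_bndK (f : KChains) : bndK (bndK f) = 0 := by
  funext T
  show (∑ i ∈ Finset.range (PTree.iEdges T), (-1:ℤ)^i *
      ∑ k ∈ Finset.range (PTree.iEdges (PTree.contract T i)),
        (-1:ℤ)^k * f (PTree.contract (PTree.contract T i) k)) = 0
  set n := PTree.iEdges T with hn
  have step : ∀ i ∈ Finset.range n, (-1:ℤ)^i *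
      (∑ k ∈ Finset.range (PTree.iEdges (PTree.contract T i)),
        (-1:ℤ)^k * f (PTree.contract (PTree.contract T i) k)) =
      ∑ k ∈ Finset.range (n-1),
        (-1:ℤ)^(i+k) * f (PTree.contract (PTree.contract T i) k) := by
    intro i hi
    rw [Finset.mem_range] at hi
    rw [PTree.iEdges_contract T i hi, Finset.mul_sum]
    exact Finset.sum_congr rfl (fun k _ => by rw [pow_add]; ring
      )
  rw [Finset.sum_congr rfl step, ← Finset.sum_product']
  refine Finset.sum_involution
    (fun p _ => if p.2 < p.1 then (p.2, p.1 - 1) else (p.2 + 1, p.1)) ?_ ?_ ?_ ?_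
  · rintro ⟨i, k⟩ hp
    simp only [Finset.mem_product, Finset.mem_range] at hp
    by_cases h : k < i
    · simp only [if_pos h]
      rw [PTree.contract_comm T k i h]
      have : i + k = (k + (i-1)) + 1 := by omega
      rw [this, pow_succ]
      ring
    · simp only [if_neg h]
      have hik : i < k + 1 := by omega
      rw [show PTree.contract (PTree.contract T i) k
            = PTree.contract (PTree.contract T (k+1)) i by
        rw [PTree.contract_comm T i (k+1) hik]; norm_num]
      have : (k + 1) + i = (i + k) + 1 := by omega
      rw [this, pow_succ]
      ring
  · rintro ⟨i, k⟩ hp _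
    by_cases h : k < i
    · simp only [if_pos h]
      intro hc
      rw [Prod.mk.injEq] at hc
      omega
    · simp only [if_neg h]
      intro hc
      rw [Prod.mk.injEq] at hc
      omega
  · rintro ⟨i, k⟩ hp
    simp only [Finset.mem_product, Finset.mem_range] at hp
    by_cases h : k < i
    · simp only [if_pos h, Finset.mem_product, Finset.mem_range]; omega
    · simp only [if_neg h, Finset.mem_product, Finset.mem_range]; omega
  · rintro ⟨i, k⟩ hp
    by_cases h : k < i
    · simp only [if_pos h]
      rw [if_neg (show ¬ (i - 1 < k) by omega), Prod.mk.injEq]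
      omega
    · simp only [if_neg h]
      rw [if_pos (show i < k + 1 by omega), Prod.mk.injEq]
      omega
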